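/- Consider the stochastic system on the open positive quadrant X = {(ξ,η) ∈ ℝ² : ξ > 0, η > 0} with one-step map f((ξ,η),w) = ((1/2)ξ(1+η+w), (1/2)η), where the disturbance w is uniformly distributed on [−1,1]. There is no polynomial function V : ℝ² → ℝ (in two real variables) such that V(x) ≥ 0 for all x ∈ X, V(x) → ∞ as ‖x‖ → ∞ along points of X, and there exists a compact set C ⊆ ℝ² with (1/2)∫_{−1}^{1} V((1/2)ξ(1+η+w), (1/2)η) dw ≤ V(ξ,η) for all (ξ,η) ∈ X \ C. -/

import Mathlib

open Filter Polynomial Finset Topology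

lemma coeffN_nonneg (c : ℕ → ℝ) (N : ℕ)
    (h : ∀ᶠ a : ℝ in atTop, 0 ≤ ∑ i ∈ Finset.range (N+1), c i * a ^ i) : 0 ≤ c N := by
  have h1 : ∀ i ∈ Finset.range (N+1),
      Tendsto (fun a : ℝ => c i * a ^ i / a ^ N) atTop (𝓝 (if i = N then c i else 0)) := by
    intro i hi
    rcases eq_or_lt_of_le (Nat.lt_succ_iff.mp (Finset.mem_range.mp hi)) with he | hl
    · subst he
      rw [if_pos rfl]
      apply Tendsto.congr' _ tendsto_const_nhds
      filter_upwards [eventually_ne_atTop (0:ℝ)] with a ha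
      field_simp
    · rw [if_neg hl.ne]
      have h3 : Tendsto (fun a : ℝ => (a ^ (N - i))⁻¹) atTop (𝓝 0) :=
        tendsto_inv_atTop_zero.comp (tendsto_pow_atTop (Nat.sub_ne_zero_of_lt hl))
      have h2 : Tendsto (fun a : ℝ => a ^ i / a ^ N) atTop (𝓝 0) := by
        apply h3.congr'
        filter_upwards [eventually_ne_atTop (0:ℝ)] with a ha
        show (a ^ (N - i))⁻¹ = a ^ i / a ^ N
        rw [eq_div_iff (pow_ne_zero _ ha), inv_mul_eq_div,
          div_eq_iff (pow_ne_zero _ ha), ← pow_add]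
        congr 1
        omega
      have := h2.const_mul (c i)
      simpa [mul_div_assoc] using this
  have key : Tendsto (fun a : ℝ => (∑ i ∈ Finset.range (N+1), c i * a ^ i) / a ^ N)
      atTop (𝓝 (c N)) := by
    have := tendsto_finset_sum _ h1
    rw [Finset.sum_ite_eq' (Finset.range (N+1)) N c, if_pos (Finset.self_mem_range_succ N)] at this
    apply this.congr
    intro a
    rw [Finset.sum_div]
  apply ge_of_tendsto key
  filter_upwards [h, eventually_gt_atTop (0:ℝ)] with a ha hpos
  exact div_nonneg ha (pow_nonneg hpos.le _)

lemma exists_rep (p : MvPolynomial (Fin 2) ℝ) :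
    ∃ P : Polynomial (Polynomial ℝ), ∀ a b : ℝ,
      MvPolynomial.eval ![a, b] p = ((P.map (Polynomial.evalRingHom b)).eval a) := by
  refine ⟨MvPolynomial.aeval ![Polynomial.X, Polynomial.C Polynomial.X] p, fun a b => ?_⟩
  induction p using MvPolynomial.induction_on with
  | C r => simp [Polynomial.eval_C]
  | add p q hp hq => simp [map_add, hp, hq]
  | mul_X p i hp =>
    rw [map_mul, map_mul, Polynomial.map_mul, Polynomial.eval_mul, ← hp]
    congr 1
    fin_cases i <;> simp

lemma int_pow (b : ℝ) (i : ℕ) :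
    (∫ w in (-1:ℝ)..1, (1 + b + w) ^ i) = ((2+b)^(i+1) - b^(i+1)) / (i+1) := by
  have := intervalIntegral.integral_comp_add_left (a := (-1:ℝ)) (b := 1)
    (fun u : ℝ => u ^ i) (1 + b)
  rw [this, integral_pow]
  norm_num
  ring_nf

lemma int_sum (c : ℕ → ℝ) (k b : ℝ) (N : ℕ) :
    (∫ w in (-1:ℝ)..1, ∑ i ∈ Finset.range (N+1), c i * (k * (1 + b + w)) ^ i)
    = ∑ i ∈ Finset.range (N+1), c i * k ^ i * (((2+b)^(i+1) - b^(i+1)) / (i+1)) := by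
  rw [intervalIntegral.integral_finset_sum]
  · refine Finset.sum_congr rfl fun i _ => ?_
    have : ∀ w : ℝ, c i * (k * (1 + b + w)) ^ i = (c i * k ^ i) * (1 + b + w) ^ i := by
      intro w; rw [mul_pow]; ring
    simp_rw [this]
    rw [intervalIntegral.integral_const_mul, int_pow, mul_assoc]
  · intro i _
    apply Continuous.intervalIntegrable
    fun_prop

lemma A_coeff (N k : ℕ) : ((X + C (2:ℝ))^(N+1) - X^(N+1)).coeff k
    = (2:ℝ)^(N+1-k) * ((N+1).choose k) - (if k = N+1 then (1:ℝ) else 0) := by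
  rw [Polynomial.coeff_sub, Polynomial.coeff_X_add_C_pow, Polynomial.coeff_X_pow]

lemma A_natDegree (N : ℕ) : ((X + C (2:ℝ))^(N+1) - X^(N+1)).natDegree = N := by
  apply le_antisymm
  · rw [Polynomial.natDegree_le_iff_coeff_eq_zero]
    intro k hk
    rw [A_coeff]
    rcases eq_or_lt_of_le (Nat.succ_le_of_lt hk) with he | hl
    · rw [if_pos he.symm, ← he]
      simp
    · rw [if_neg (by omega), Nat.choose_eq_zero_of_lt hl]
      simp
  · apply Polynomial.le_natDegree_of_ne_zero
    rw [A_coeff, if_neg (by omega)]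
    have : (N+1-N) = 1 := by omega
    rw [this, Nat.choose_succ_self_right]
    push_cast
    nlinarith [Nat.cast_nonneg (α := ℝ) N]

lemma A_leadingCoeff (N : ℕ) :
    ((X + C (2:ℝ))^(N+1) - X^(N+1)).leadingCoeff = 2 * ((N:ℝ)+1) := by
  rw [Polynomial.leadingCoeff, A_natDegree, A_coeff, if_neg (by omega)]
  have : (N+1-N) = 1 := by omega
  rw [this, Nat.choose_succ_self_right]
  push_cast
  ring

open MeasureTheory

theorem no_polynomial_drift_certificate :
    ¬ ∃ (p : MvPolynomial (Fin 2) ℝ) (C : Set (ℝ × ℝ)),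
        IsCompact C ∧
        (∀ x : ℝ × ℝ, 0 < x.1 → 0 < x.2 → 0 ≤ MvPolynomial.eval ![x.1, x.2] p) ∧
        Tendsto (fun x : ℝ × ℝ => MvPolynomial.eval ![x.1, x.2] p)
          (comap (fun x : ℝ × ℝ => ‖x‖) atTop ⊓ 𝓟 {x : ℝ × ℝ | 0 < x.1 ∧ 0 < x.2}) atTop ∧
        (∀ x : ℝ × ℝ, 0 < x.1 → 0 < x.2 → x ∉ C →
          (1 / 2) * (∫ w in (-1 : ℝ)..1,
              MvPolynomial.eval ![(1 / 2) * x.1 * (1 + x.2 + w), (1 / 2) * x.2] p)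
            ≤ MvPolynomial.eval ![x.1, x.2] p) := by
  rintro ⟨p, C, hC, hpos, htop, hdrift⟩
  obtain ⟨P, hP⟩ := exists_rep p
  set N := P.natDegree with hNdef
  have hVsum : ∀ a b : ℝ, MvPolynomial.eval ![a, b] p
      = ∑ i ∈ Finset.range (N+1), (P.coeff i).eval b * a ^ i := by
    intro a b
    rw [hP, Polynomial.eval_eq_sum_range' (Nat.lt_succ_of_le Polynomial.natDegree_map_le)]
    simp [Polynomial.coeff_map]
    rfl
  -- the curve a ↦ (a,1) escapes to infinity inside the quadrant
  have hcurve : Tendsto (fun a : ℝ => ((a, 1) : ℝ × ℝ)) atTop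
      (comap (fun x : ℝ × ℝ => ‖x‖) atTop ⊓ 𝓟 {x : ℝ × ℝ | 0 < x.1 ∧ 0 < x.2}) := by
    refine tendsto_inf.mpr ⟨tendsto_comap_iff.mpr ?_, tendsto_principal.mpr ?_⟩
    · refine tendsto_atTop_mono (fun a => ?_) tendsto_id
      calc (id a : ℝ) ≤ |a| := le_abs_self a
        _ = ‖((a,1):ℝ×ℝ).1‖ := by simp [Real.norm_eq_abs]
        _ ≤ ‖((a,1):ℝ×ℝ)‖ := norm_fst_le _
    · filter_upwards [eventually_gt_atTop (0:ℝ)] with a ha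
      exact ⟨ha, one_pos⟩
  have hVtop : Tendsto (fun a : ℝ => MvPolynomial.eval ![a, (1:ℝ)] p) atTop atTop := by
    have := htop.comp hcurve
    exact this
  have hN : 1 ≤ N := by
    by_contra hN0
    push_neg at hN0
    have hN0 : N = 0 := by omega
    have hconst : ∀ a : ℝ, MvPolynomial.eval ![a, (1:ℝ)] p = (P.coeff 0).eval 1 := by
      intro a
      rw [hVsum, hN0]
      simp
    obtain ⟨a, ha⟩ := (hVtop.eventually (eventually_gt_atTop ((P.coeff 0).eval 1))).exists
    rw [hconst a] at ha
    exact lt_irrefl _ ha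
  have hPne : P ≠ 0 := by
    intro h
    rw [hNdef, h, Polynomial.natDegree_zero] at hN
    omega
  set q : Polynomial ℝ := P.leadingCoeff with hqdef
  have hqcoeff : q = P.coeff N := rfl
  have hqne : q ≠ 0 := Polynomial.leadingCoeff_ne_zero.mpr hPne
  -- q is nonnegative on the positive reals
  have hqnonneg : ∀ b : ℝ, 0 < b → 0 ≤ q.eval b := by
    intro b hb
    have := coeffN_nonneg (fun i => (P.coeff i).eval b) N ?_
    · exact this
    · filter_upwards [eventually_gt_atTop (0:ℝ)] with a ha
      rw [← hVsum]
      exact hpos (a, b) ha hb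
  -- the drift inequality on the leading coefficient
  have hkey : ∀ b : ℝ, 0 < b →
      0 ≤ q.eval b - q.eval ((1/2)*b) * ((1/2)^N * (((2+b)^(N+1) - b^(N+1)) / (2*((N:ℝ)+1)))) := by
    intro b hb
    obtain ⟨R, hR⟩ := hC.isBounded.exists_norm_le
    refine coeffN_nonneg (fun i => (P.coeff i).eval b -
      (P.coeff i).eval ((1/2)*b) * ((1/2)^i * (((2+b)^(i+1) - b^(i+1)) / (2*((i:ℝ)+1))))) N ?_
    filter_upwards [eventually_gt_atTop R, eventually_gt_atTop (0:ℝ)] with a haR ha0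
    have hnotC : ((a, b) : ℝ × ℝ) ∉ C := by
      intro hmem
      have h1 := hR _ hmem
      have h2 : a ≤ ‖((a,b):ℝ×ℝ)‖ := by
        calc a ≤ |a| := le_abs_self a
          _ = ‖((a,b):ℝ×ℝ).1‖ := by simp [Real.norm_eq_abs]
          _ ≤ _ := norm_fst_le _
      linarith
    have hdr := hdrift (a, b) ha0 hb hnotC
    simp only at hdr
    have hint : (∫ w in (-1:ℝ)..1, MvPolynomial.eval ![(1/2)*a*(1+b+w), (1/2)*b] p)
        = ∑ i ∈ Finset.range (N+1),
            (P.coeff i).eval ((1/2)*b) * ((1/2)*a) ^ i * (((2+b)^(i+1) - b^(i+1)) / ((i:ℝ)+1)) := by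
      rw [← int_sum (fun i => (P.coeff i).eval ((1/2)*b)) ((1/2)*a) b N]
      apply intervalIntegral.integral_congr
      intro w _
      exact hVsum _ _
    rw [hint, hVsum a b] at hdr
    have hexp : ∑ i ∈ Finset.range (N+1), (fun i => (P.coeff i).eval b -
        (P.coeff i).eval ((1/2)*b) * ((1/2)^i * (((2+b)^(i+1) - b^(i+1)) / (2*((i:ℝ)+1))))) i * a ^ i
        = (∑ i ∈ Finset.range (N+1), (P.coeff i).eval b * a ^ i)
          - (1/2) * ∑ i ∈ Finset.range (N+1),
              (P.coeff i).eval ((1/2)*b) * ((1/2)*a) ^ i * (((2+b)^(i+1) - b^(i+1)) / ((i:ℝ)+1)) := by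
      rw [Finset.mul_sum, ← Finset.sum_sub_distrib]
      refine Finset.sum_congr rfl fun i _ => ?_
      have hi : ((i:ℝ)+1) ≠ 0 := by positivity
      field_simp
      ring
    rw [hexp]
    linarith
  -- leading coefficient of q is positive
  have hcc : 0 < q.leadingCoeff := by
    have h0 : 0 ≤ q.coeff q.natDegree := by
      refine coeffN_nonneg (fun i => q.coeff i) q.natDegree ?_
      filter_upwards [eventually_gt_atTop (0:ℝ)] with b hb
      rw [← Polynomial.eval_eq_sum_range' (Nat.lt_succ_self _)]
      exact hqnonneg b hb
    have : q.leadingCoeff ≠ 0 := Polynomial.leadingCoeff_ne_zero.mpr hqne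
    rw [Polynomial.leadingCoeff] at this ⊢
    exact lt_of_le_of_ne h0 (Ne.symm this)
  set m := q.natDegree with hmdef
  set A : Polynomial ℝ := (Polynomial.X + Polynomial.C 2)^(N+1) - Polynomial.X^(N+1) with hAdef
  set B : Polynomial ℝ := q.comp (Polynomial.C (1/2) * Polynomial.X) with hBdef
  set G : Polynomial ℝ := Polynomial.C ((1/2)^N / (2*((N:ℝ)+1))) * (A * B) with hGdef
  have hAne : A ≠ 0 := by
    intro h
    have := A_leadingCoeff N
    rw [← hAdef, h] at this
    simp only [Polynomial.leadingCoeff_zero] at this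
    nlinarith [Nat.cast_nonneg (α := ℝ) N]
  have hBlead : B.leadingCoeff = q.leadingCoeff * (1/2)^m := by
    rw [hBdef, Polynomial.leadingCoeff_comp
      (by rw [Polynomial.natDegree_C_mul_X _ (by norm_num)]; norm_num),
      Polynomial.leadingCoeff_C_mul_X]
  have hBne : B ≠ 0 := by
    intro h
    rw [h, Polynomial.leadingCoeff_zero] at hBlead
    have : (0:ℝ) < q.leadingCoeff * (1/2)^m := by positivity
    rw [← hBlead] at this
    exact lt_irrefl _ this
  have hBdeg : B.natDegree = m := by
    rw [hBdef, Polynomial.natDegree_comp, Polynomial.natDegree_C_mul_X _ (by norm_num), mul_one]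
  have hk0 : ((1:ℝ)/2)^N / (2*((N:ℝ)+1)) ≠ 0 := by positivity
  have hGdeg : G.natDegree = N + m := by
    rw [hGdef, Polynomial.natDegree_C_mul hk0, Polynomial.natDegree_mul hAne hBne,
      A_natDegree, hBdeg]
  have hGlead : G.leadingCoeff = ((1/2)^N / (2*((N:ℝ)+1))) * (2*((N:ℝ)+1)) * (q.leadingCoeff * (1/2)^m) := by
    rw [hGdef, Polynomial.leadingCoeff_mul, Polynomial.leadingCoeff_mul,
      Polynomial.leadingCoeff_C, hBlead, hAdef, A_leadingCoeff]
    ring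
  have hGlead_pos : 0 < G.leadingCoeff := by
    rw [hGlead]
    have hN1 : (0:ℝ) < (N:ℝ) + 1 := by positivity
    positivity
  have hGeval : ∀ b : ℝ, G.eval b
      = q.eval ((1/2)*b) * ((1/2)^N * (((2+b)^(N+1) - b^(N+1)) / (2*((N:ℝ)+1)))) := by
    intro b
    rw [hGdef, hAdef, hBdef]
    simp [Polynomial.eval_comp]
    ring
  have hdeglt : q.degree < G.degree := Polynomial.degree_lt_degree (by rw [hGdeg, ← hmdef]; omega)
  have hDlead : (q - G).leadingCoeff = -G.leadingCoeff :=
    Polynomial.leadingCoeff_sub_of_degree_lt' hdeglt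
  have hDdegpos : 0 < (q - G).degree := by
    rw [Polynomial.degree_sub_eq_right_of_degree_lt hdeglt]
    rw [← Polynomial.natDegree_pos_iff_degree_pos, hGdeg]
    omega
  have hbot := Polynomial.tendsto_atBot_of_leadingCoeff_nonpos (q - G) hDdegpos
    (by rw [hDlead]; linarith)
  have hDnn : ∀ᶠ b : ℝ in atTop, 0 ≤ (q - G).eval b := by
    filter_upwards [eventually_gt_atTop (0:ℝ)] with b hb
    rw [Polynomial.eval_sub, hGeval]
    exact hkey b hb
  obtain ⟨b, hb1, hb2⟩ := ((hbot.eventually (eventually_lt_atBot (0:ℝ))).and hDnn).exists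
  linarith
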